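/- For all integers d ≥ 1 and 0 ≤ ℓ ≤ d, the following identity of formal power series holds: (1−x)^{d+1} · ∑_{t≥0} t^ℓ (t+1)^{d−ℓ} x^t = ∑_{π ∈ S_d} x^{des_ℓ(π)}, where for a permutation π of {1,…,d}, des_ℓ(π) := #{ j ∈ {1,…,d−1} : π(j) > π(j+1) } + 1 if π(1) ≤ ℓ, and des_ℓ(π) := #{ j ∈ {1,…,d−1} : π(j) > π(j+1) } otherwise. (Combinatorial content of Proposition 5.4: the h-polynomial of the barycentric subdivision of the (d−1)-simplex with ℓ facets removed equals A_{d,ℓ}^{(1)}.) -/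

import Mathlib

open Polynomial PowerSeries

/-- The value `π(i+1) ∈ {1, …, d}` of a permutation `π ∈ S_d` at the (1-based) position
`i+1`, for `0 ≤ i < d` (and `0` for out-of-range indices). -/
def permVal (d : ℕ) (π : Equiv.Perm (Fin d)) (i : ℕ) : ℕ :=
  if h : i < d then ((π ⟨i, h⟩ : Fin d) : ℕ) + 1 else 0

/-- The `ℓ`-descent statistic of a permutation `π ∈ S_d`:
`des_ℓ(π) = #{j ∈ {1, …, d-1} : π(j) > π(j+1)}`, plus `1` if `π(1) ≤ ℓ`. -/
def permDesL (d ℓ : ℕ) (π : Equiv.Perm (Fin d)) : ℕ :=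
  ((Finset.range (d - 1)).filter fun j => permVal d π (j + 1) < permVal d π j).card +
    (if permVal d π 0 ≤ ℓ then 1 else 0)

namespace EulerianAux

/-! ### Basic descent machinery -/

/-- descent at 0-based position `j` -/
abbrev dsc (d : ℕ) (π : Equiv.Perm (Fin d)) (j : ℕ) : Prop :=
  permVal d π (j + 1) < permVal d π j

lemma dsc_iff {d : ℕ} (π : Equiv.Perm (Fin d)) {j : ℕ} (h : j + 1 < d) :
    dsc d π j ↔ (π ⟨j + 1, h⟩ : ℕ) < π ⟨j, by omega⟩ := by
  unfold dsc permVal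
  rw [dif_pos h, dif_pos (show j < d by omega)]
  omega

/-- the extra `+1` when `π(1) ≤ ℓ` -/
def cc (d ℓ : ℕ) (π : Equiv.Perm (Fin d)) : ℕ := if permVal d π 0 ≤ ℓ then 1 else 0

/-- number of descents strictly before position `i`, plus `cc` -/
def NN (d ℓ : ℕ) (π : Equiv.Perm (Fin d)) (i : ℕ) : ℕ :=
  cc d ℓ π + ((Finset.range i).filter fun j => dsc d π j).card

lemma NN_zero {d ℓ : ℕ} (π : Equiv.Perm (Fin d)) : NN d ℓ π 0 = cc d ℓ π := by
  simp [NN]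

lemma NN_succ {d ℓ : ℕ} (π : Equiv.Perm (Fin d)) (i : ℕ) :
    NN d ℓ π (i + 1) = NN d ℓ π i + if dsc d π i then 1 else 0 := by
  unfold NN
  rw [Finset.range_add_one, Finset.filter_insert]
  split
  · rw [Finset.card_insert_of_notMem (by simp)]
    omega
  · omega

lemma NN_mono {d ℓ : ℕ} (π : Equiv.Perm (Fin d)) {i j : ℕ} (h : i ≤ j) :
    NN d ℓ π i ≤ NN d ℓ π j := by
  unfold NN
  have := Finset.card_le_card (Finset.filter_subset_filter (fun j => dsc d π j)
    (Finset.range_subset_range.mpr h))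
  omega

lemma cc_le_NN {d ℓ : ℕ} (π : Equiv.Perm (Fin d)) (i : ℕ) : cc d ℓ π ≤ NN d ℓ π i :=
  Nat.le_add_right _ _

lemma NN_pred {d ℓ : ℕ} (π : Equiv.Perm (Fin d)) :
    NN d ℓ π (d - 1) = permDesL d ℓ π := by
  unfold NN permDesL cc dsc
  omega

lemma NN_le_des {d ℓ : ℕ} (π : Equiv.Perm (Fin d)) {i : ℕ} (h : i ≤ d - 1) :
    NN d ℓ π i ≤ permDesL d ℓ π := by
  rw [← NN_pred (ℓ := ℓ) π]
  exact NN_mono π h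

/-- no descents on `[a, a+m)` implies `π` increases from `a` to `a+m` -/
lemma mono_of_no_dsc {d : ℕ} (π : Equiv.Perm (Fin d)) :
    ∀ (m a : ℕ) (h : a + m < d), (∀ j, a ≤ j → j < a + m → ¬ dsc d π j) →
      (π ⟨a, by omega⟩ : ℕ) ≤ π ⟨a + m, h⟩ := by
  intro m
  induction m with
  | zero => intro a h _; exact le_refl _
  | succ m ih =>
    intro a h hnd
    have h1 : a + m < d := by omega
    have h2 := ih a h1 (fun j hj hj' => hnd j hj (by omega))
    have h3 : ¬ dsc d π (a + m) := hnd (a + m) (by omega) (by omega)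
    rw [dsc_iff π (show (a + m) + 1 < d by omega)] at h3
    have : (π ⟨a + m, h1⟩ : ℕ) ≤ π ⟨(a + m) + 1, by omega⟩ := by omega
    calc (π ⟨a, by omega⟩ : ℕ) ≤ π ⟨a + m, h1⟩ := h2
      _ ≤ π ⟨(a + m) + 1, by omega⟩ := this
      _ = π ⟨a + (m + 1), h⟩ := rfl

lemma exists_dsc {d : ℕ} (π : Equiv.Perm (Fin d)) {a b : ℕ} (hab : a ≤ b) (hb : b < d)
    (hlt : (π ⟨b, hb⟩ : ℕ) < π ⟨a, by omega⟩) :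
    ∃ m, a ≤ m ∧ m < b ∧ dsc d π m := by
  by_contra hcon
  push_neg at hcon
  have := mono_of_no_dsc π (b - a) a (by omega)
    (fun j hj hj' => not_lt.mpr (hcon j hj (by omega)))
  have he : (⟨a + (b - a), by omega⟩ : Fin d) = ⟨b, hb⟩ := Fin.mk_eq_mk.mpr (by omega)
  rw [he] at this
  omega

/-! ### Values of tuples as `ℕ`-valued functions -/

/-- `fv g m = g m` as a natural number (0 out of range) -/
def fv {d N : ℕ} (g : Fin d → Fin N) (m : ℕ) : ℕ :=
  if h : m < d then (g ⟨m, h⟩ : ℕ) else 0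

lemma fv_eq {d N : ℕ} (g : Fin d → Fin N) {m : ℕ} (h : m < d) :
    fv g m = g ⟨m, h⟩ := dif_pos h

lemma fv_apply {d N : ℕ} (g : Fin d → Fin N) (i : Fin d) :
    fv g i.val = g i := by
  rw [fv_eq g i.isLt]

lemma fv_lt {d N : ℕ} (g : Fin d → Fin N) {m : ℕ} (h : m < d) : fv g m < N := by
  rw [fv_eq g h]; exact (g ⟨m, h⟩).isLt

/-! ### The chain sets -/

/-- Weakly increasing chains compatible with `π`, with strictness forced at descents
(through the lexicographic tie-breaking condition), and positive values where `π` is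
below `ℓ`. -/
def Chains (d ℓ t : ℕ) (π : Equiv.Perm (Fin d)) : Type :=
  {g : Fin d → Fin (t + 1) //
    Monotone g ∧ (∀ i j : Fin d, i < j → g i = g j → π i < π j) ∧
      ∀ i : Fin d, (π i : ℕ) < ℓ → 0 < (g i : ℕ)}

instance (d ℓ t : ℕ) (π : Equiv.Perm (Fin d)) : Finite (Chains d ℓ t π) :=
  Subtype.finite

lemma cc_le_g {d ℓ t : ℕ} {π : Equiv.Perm (Fin d)} (hd : 0 < d) (g : Chains d ℓ t π) :
    cc d ℓ π ≤ fv g.1 0 := by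
  unfold cc
  split
  · rename_i h
    rw [permVal, dif_pos hd] at h
    have := g.2.2.2 ⟨0, hd⟩ (by omega)
    rw [fv_eq g.1 hd]
    omega
  · omega

lemma chain_adj {d ℓ t : ℕ} {π : Equiv.Perm (Fin d)} (g : Chains d ℓ t π) {m : ℕ}
    (h : m + 1 < d) :
    fv g.1 m + NN d ℓ π (m + 1) ≤ fv g.1 (m + 1) + NN d ℓ π m := by
  rw [NN_succ]
  have hle : g.1 ⟨m, by omega⟩ ≤ g.1 ⟨m + 1, h⟩ :=
    g.2.1 (show (⟨m, by omega⟩ : Fin d) ≤ ⟨m + 1, h⟩ by simp [Fin.le_def])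
  rw [fv_eq g.1 (show m < d by omega), fv_eq g.1 h]
  by_cases hm : dsc d π m
  · rw [if_pos hm]
    rw [dsc_iff π h] at hm
    have hne : g.1 ⟨m, by omega⟩ ≠ g.1 ⟨m + 1, h⟩ := by
      intro he
      have := g.2.2.1 ⟨m, by omega⟩ ⟨m + 1, h⟩ (by simp [Fin.lt_def]) he
      rw [Fin.lt_def] at this
      omega
    have : g.1 ⟨m, by omega⟩ < g.1 ⟨m + 1, h⟩ := lt_of_le_of_ne hle hne
    rw [Fin.lt_def] at this
    omega
  · rw [if_neg hm]
    rw [Fin.le_def] at hle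
    omega

lemma chain_ineq {d ℓ t : ℕ} {π : Equiv.Perm (Fin d)} (g : Chains d ℓ t π) :
    ∀ (b : ℕ), b < d → ∀ (a : ℕ), a ≤ b →
      fv g.1 a + NN d ℓ π b ≤ fv g.1 b + NN d ℓ π a := by
  intro b
  induction b with
  | zero =>
    intro _ a ha
    have : a = 0 := by omega
    subst this; exact le_refl _
  | succ b ih =>
    intro hb a ha
    rcases Nat.eq_or_lt_of_le ha with rfl | ha'
    · exact le_refl _
    · have h1 := ih (by omega) a (by omega)
      have h2 := chain_adj g hb
      omega

lemma NN_le_chain {d ℓ t : ℕ} {π : Equiv.Perm (Fin d)} (hd : 0 < d) (g : Chains d ℓ t π)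
    {b : ℕ} (hb : b < d) : NN d ℓ π b ≤ fv g.1 b := by
  have h1 := chain_ineq g b hb 0 (Nat.zero_le _)
  have h2 := cc_le_g hd g
  rw [NN_zero] at h1
  omega

lemma des_le_chain {d ℓ t : ℕ} {π : Equiv.Perm (Fin d)} (hd : 0 < d) (g : Chains d ℓ t π) :
    permDesL d ℓ π ≤ t := by
  have h1 := NN_le_chain hd g (show d - 1 < d by omega)
  have h2 := fv_lt g.1 (show d - 1 < d by omega)
  rw [NN_pred] at h1
  omega

/-! ### Chains are counted by monotone maps -/

/-- the shifting bijection between compatible chains and monotone maps -/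
noncomputable def chainsEquiv {d ℓ t : ℕ} (π : Equiv.Perm (Fin d)) (hd : 0 < d)
    (hdt : permDesL d ℓ π ≤ t) :
    Chains d ℓ t π ≃ {b : Fin d → Fin ((t - permDesL d ℓ π) + 1) // Monotone b} where
  toFun g := ⟨fun i => ⟨fv g.1 i.val - NN d ℓ π i.val, by
      have h1 := chain_ineq g (d - 1) (by omega) i.val (by omega)
      have h2 := fv_lt g.1 (show d - 1 < d by omega)
      have h3 := NN_le_chain hd g i.isLt
      rw [NN_pred] at h1
      omega⟩, by
    intro i j hij
    rw [Fin.le_def] at hij ⊢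
    have h1 := chain_ineq g j.val j.isLt i.val hij
    have h2 := NN_le_chain hd g i.isLt
    have h3 := NN_le_chain hd g j.isLt
    simp only []
    omega⟩
  invFun b := ⟨fun i => ⟨(b.1 i : ℕ) + NN d ℓ π i.val, by
      have h1 : (b.1 i : ℕ) ≤ t - permDesL d ℓ π := by
        have := (b.1 i).isLt; omega
      have h2 := NN_le_des (ℓ := ℓ) π (show i.val ≤ d - 1 by have := i.isLt; omega)
      omega⟩, by
    constructor
    · intro i j hij
      rw [Fin.le_def]
      simp only []
      have h1 : (b.1 i : ℕ) ≤ b.1 j := by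
        have := b.2 hij; rw [Fin.le_def] at this; exact this
      have h2 := NN_mono (ℓ := ℓ) π (show i.val ≤ j.val from hij)
      omega
    constructor
    · intro i j hij heq
      have e : (b.1 i : ℕ) + NN d ℓ π i.val = (b.1 j : ℕ) + NN d ℓ π j.val := by
        have := congrArg Fin.val heq
        simpa using this
      by_contra hc
      have hji : π j < π i := by
        rcases lt_or_ge (π j) (π i) with h | h
        · exact h
        · rcases lt_or_eq_of_le h with h' | h'
          · exact absurd h' hc
          · exact absurd (π.injective h') (by intro he; subst he; exact absurd rfl hij.ne)
      have hlt : (π ⟨j.val, j.isLt⟩ : ℕ) < π ⟨i.val, i.isLt⟩ := by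
        rw [Fin.eta, Fin.eta]
        exact hji
      obtain ⟨m, hm1, hm2, hm3⟩ := exists_dsc π (show i.val ≤ j.val from hij.le) j.isLt hlt
      have h1 : NN d ℓ π (m + 1) ≤ NN d ℓ π j.val := NN_mono π (by omega)
      have h2 : NN d ℓ π i.val ≤ NN d ℓ π m := NN_mono π hm1
      rw [NN_succ, if_pos hm3] at h1
      have h3 : (b.1 i : ℕ) ≤ b.1 j := by
        have := b.2 hij.le; rw [Fin.le_def] at this; exact this
      omega
    · intro i hi
      simp only []
      have : 0 < NN d ℓ π i.val := by
        by_contra h0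
        push_neg at h0
        have hcc : cc d ℓ π = 0 := by
          have := cc_le_NN (ℓ := ℓ) (d := d) π i.val; omega
        have hfil : ((Finset.range i.val).filter fun j => dsc d π j) = ∅ := by
          have : ((Finset.range i.val).filter fun j => dsc d π j).card = 0 := by
            unfold NN at h0; omega
          exact Finset.card_eq_zero.mp this
        have hl0 : ℓ ≤ (π ⟨0, hd⟩ : ℕ) := by
          unfold cc at hcc
          rw [permVal, dif_pos hd] at hcc
          split at hcc
          · omega
          · rename_i hx; omega
        have hlt : (π ⟨i.val, i.isLt⟩ : ℕ) < π ⟨0, hd⟩ := by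
          rw [Fin.eta]; omega
        obtain ⟨m, _, hm2, hm3⟩ := exists_dsc π (Nat.zero_le i.val) i.isLt hlt
        have : m ∈ (Finset.range i.val).filter fun j => dsc d π j := by
          simp only [Finset.mem_filter, Finset.mem_range]
          exact ⟨hm2, hm3⟩
        rw [hfil] at this
        exact absurd this (Finset.notMem_empty m)
      omega⟩
  left_inv g := by
    apply Subtype.ext
    funext i
    apply Fin.ext
    simp only []
    have h1 := NN_le_chain hd g i.isLt
    have h2 := fv_apply g.1 i
    omega
  right_inv b := by
    apply Subtype.ext
    funext i
    apply Fin.ext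
    simp only []
    rw [fv_apply]
    simp

/-! ### Counting monotone maps -/

lemma strict_ineq {d N : ℕ} (h : Fin d → Fin N) (hs : StrictMono h) :
    ∀ (b : ℕ), b < d → ∀ (a : ℕ), a ≤ b → fv h a + b ≤ fv h b + a := by
  intro b
  induction b with
  | zero =>
    intro _ a ha
    have : a = 0 := by omega
    subst this; exact le_refl _
  | succ b ih =>
    intro hb a ha
    rcases Nat.eq_or_lt_of_le ha with rfl | ha'
    · exact le_refl _
    · have h1 := ih (by omega) a (by omega)
      have h2 : fv h b < fv h (b + 1) := by
        rw [fv_eq h (show b < d by omega), fv_eq h hb]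
        exact Fin.lt_def.mp (hs (show (⟨b, by omega⟩ : Fin d) < ⟨b + 1, hb⟩ by
          simp [Fin.lt_def]))
      omega

lemma le_fv_strict {d N : ℕ} (h : Fin d → Fin N) (hs : StrictMono h) {a : ℕ} (ha : a < d) :
    a ≤ fv h a := by
  have := strict_ineq h hs a ha 0 (Nat.zero_le _)
  omega

/-- monotone maps `Fin d → Fin (m+1)` are in bijection with strictly monotone maps
`Fin d → Fin (m + d)` -/
def monoStrictEquiv {d : ℕ} (hd : 0 < d) (m : ℕ) :
    {b : Fin d → Fin (m + 1) // Monotone b} ≃ {h : Fin d → Fin (m + d) // StrictMono h} where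
  toFun b := ⟨fun i => ⟨(b.1 i : ℕ) + i.val, by
      have := (b.1 i).isLt; have := i.isLt; omega⟩, by
    intro i j hij
    rw [Fin.lt_def]
    simp only []
    have h1 : (b.1 i : ℕ) ≤ b.1 j := by
      have := b.2 hij.le; rw [Fin.le_def] at this; exact this
    have h2 : i.val < j.val := hij
    omega⟩
  invFun h := ⟨fun i => ⟨fv h.1 i.val - i.val, by
      have h1 := strict_ineq h.1 h.2 (d - 1) (by omega) i.val (by have := i.isLt; omega)
      have h2 := fv_lt h.1 (show d - 1 < d by omega)
      omega⟩, by
    intro i j hij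
    rw [Fin.le_def]
    simp only []
    have h1 := strict_ineq h.1 h.2 j.val j.isLt i.val hij
    have h2 := le_fv_strict h.1 h.2 i.isLt
    omega⟩
  left_inv b := by
    apply Subtype.ext
    funext i
    apply Fin.ext
    simp only []
    rw [fv_apply]
    simp
  right_inv h := by
    apply Subtype.ext
    funext i
    apply Fin.ext
    simp only []
    have h1 := le_fv_strict h.1 h.2 i.isLt
    have h2 := fv_apply h.1 i
    omega

/-- strictly monotone maps `Fin d → Fin N` are in bijection with `d`-subsets -/
def strictFinsetEquiv (d N : ℕ) :
    {h : Fin d → Fin N // StrictMono h} ≃ {s : Finset (Fin N) // s.card = d} where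
  toFun h := ⟨Finset.univ.image h.1, by
    rw [Finset.card_image_of_injective _ h.2.injective, Finset.card_univ, Fintype.card_fin]⟩
  invFun s := ⟨s.1.orderEmbOfFin s.2, (s.1.orderEmbOfFin s.2).strictMono⟩
  left_inv h := by
    apply Subtype.ext
    exact (Finset.orderEmbOfFin_unique _ (fun x => Finset.mem_image_of_mem _ (Finset.mem_univ x))
      h.2).symm
  right_inv s := by
    apply Subtype.ext
    ext x
    simp only [Finset.mem_image, Finset.mem_univ, true_and]
    constructor
    · rintro ⟨i, rfl⟩
      exact Finset.orderEmbOfFin_mem s.1 s.2 i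
    · intro hx
      have : x ∈ Set.range (s.1.orderEmbOfFin s.2) := by
        rw [Finset.range_orderEmbOfFin]
        exact hx
      obtain ⟨i, hi⟩ := this
      exact ⟨i, hi⟩

lemma card_mono {d : ℕ} (hd : 0 < d) (m : ℕ) :
    Nat.card {b : Fin d → Fin (m + 1) // Monotone b} = (d + (m : ℕ)).choose d := by
  rw [Nat.card_congr ((monoStrictEquiv hd m).trans (strictFinsetEquiv d (m + d)))]
  rw [Nat.card_eq_fintype_card, Fintype.card_finset_len, Fintype.card_fin, Nat.add_comm]

lemma card_chains {d ℓ t : ℕ} (hd : 0 < d) (π : Equiv.Perm (Fin d)) :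
    Nat.card (Chains d ℓ t π) =
      if permDesL d ℓ π ≤ t then (d + (t - permDesL d ℓ π)).choose d else 0 := by
  split
  · rename_i hdt
    rw [Nat.card_congr (chainsEquiv π hd hdt), card_mono hd]
  · rename_i hdt
    have : IsEmpty (Chains d ℓ t π) := ⟨fun g => hdt (des_le_chain hd g)⟩
    exact Nat.card_of_isEmpty

/-! ### The sorting bijection -/

lemma sort_chain {d ℓ t : ℕ} {π : Equiv.Perm (Fin d)} (g : Chains d ℓ t π) :
    Tuple.sort (g.1 ∘ ⇑π.symm) = π := by
  symm
  rw [Tuple.eq_sort_iff]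
  have hcomp : (g.1 ∘ ⇑π.symm) ∘ ⇑π = g.1 := by
    funext i; simp
  constructor
  · rw [hcomp]
    exact g.2.1
  · intro i j hij he
    apply g.2.2.1 i j hij
    simpa using he

/-- the underlying function of the sorting bijection -/
def sortMap (d ℓ t : ℕ) :
    (Σ π : Equiv.Perm (Fin d), Chains d ℓ t π) →
      {f : Fin d → Fin (t + 1) // ∀ i : Fin d, (i : ℕ) < ℓ → 0 < (f i : ℕ)} :=
  fun x => ⟨x.2.1 ∘ ⇑x.1.symm, fun i hi => by
    have := x.2.2.2.2 (x.1.symm i) (by rwa [Equiv.apply_symm_apply])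
    simpa using this⟩

lemma sortMap_bijective (d ℓ t : ℕ) : Function.Bijective (sortMap d ℓ t) := by
  constructor
  · rintro ⟨π, g⟩ ⟨π', g'⟩ h
    have hf : g.1 ∘ ⇑π.symm = g'.1 ∘ ⇑π'.symm := congrArg Subtype.val h
    have hππ : π = π' := by
      rw [← sort_chain g, ← sort_chain g', hf]
    subst hππ
    have hg : g.1 = g'.1 := by
      funext i
      have := congrFun hf (π i)
      simpa using this
    exact congrArg (Sigma.mk π) (Subtype.ext hg)
  · intro f
    have hst := (Tuple.eq_sort_iff (f := f.1) (σ := Tuple.sort f.1)).mp rfl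
    refine ⟨⟨Tuple.sort f.1, ⟨f.1 ∘ ⇑(Tuple.sort f.1), hst.1, fun i j hij he => hst.2 i j hij he,
      fun i hi => f.2 (Tuple.sort f.1 i) hi⟩⟩, ?_⟩
    apply Subtype.ext
    funext x
    simp [sortMap]

/-! ### The counting identity -/

lemma card_A {d ℓ t : ℕ} (hℓ : ℓ ≤ d) :
    Nat.card {f : Fin d → Fin (t + 1) // ∀ i : Fin d, (i : ℕ) < ℓ → 0 < (f i : ℕ)} =
      t ^ ℓ * (t + 1) ^ (d - ℓ) := by
  rw [Nat.card_congr (Equiv.subtypePiEquivPi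
    (p := fun (i : Fin d) (v : Fin (t + 1)) => (i : ℕ) < ℓ → 0 < (v : ℕ)))]
  rw [Nat.card_pi]
  have hcard : ∀ i : Fin d,
      Nat.card {v : Fin (t + 1) // (i : ℕ) < ℓ → 0 < (v : ℕ)} =
        if (i : ℕ) < ℓ then t else t + 1 := by
    intro i
    split
    · rename_i h
      have e : {v : Fin (t + 1) // (i : ℕ) < ℓ → 0 < (v : ℕ)} ≃ Fin t :=
        { toFun := fun v => ⟨(v.1 : ℕ) - 1, by
            have := v.2 h; have := v.1.isLt; omega⟩
          invFun := fun w => ⟨⟨w.val + 1, by have := w.isLt; omega⟩, fun _ => by simp⟩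
          left_inv := fun v => by
            apply Subtype.ext; apply Fin.ext
            have := v.2 h
            simp only []
            omega
          right_inv := fun w => by apply Fin.ext; simp }
      rw [Nat.card_congr e]
      simp
    · rename_i h
      rw [Nat.card_congr (Equiv.subtypeUnivEquiv (fun v hc => absurd hc h))]
      simp
  rw [Finset.prod_congr rfl (fun i _ => hcard i)]
  rw [Fin.prod_univ_eq_prod_range (fun n => if n < ℓ then t else t + 1) d]
  obtain ⟨e, rfl⟩ : ∃ e, d = ℓ + e := ⟨d - ℓ, by omega⟩
  rw [Finset.prod_range_add]
  rw [Nat.add_sub_cancel_left]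
  congr 1
  · rw [Finset.prod_congr rfl (fun i hi => if_pos (Finset.mem_range.mp hi))]
    rw [Finset.prod_const, Finset.card_range]
  · rw [Finset.prod_congr rfl (fun i _ => if_neg (by omega))]
    rw [Finset.prod_const, Finset.card_range]

lemma key (d ℓ : ℕ) (hd : 1 ≤ d) (hℓ : ℓ ≤ d) (t : ℕ) :
    t ^ ℓ * (t + 1) ^ (d - ℓ) =
      ∑ π : Equiv.Perm (Fin d),
        (if permDesL d ℓ π ≤ t then (d + (t - permDesL d ℓ π)).choose d else 0) := by
  rw [← card_A (t := t) hℓ]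
  rw [Nat.card_eq_of_bijective _ (sortMap_bijective d ℓ t) |>.symm]
  letI : ∀ π : Equiv.Perm (Fin d), Fintype (Chains d ℓ t π) := fun π => Fintype.ofFinite _
  rw [Nat.card_eq_fintype_card, Fintype.card_sigma]
  refine Finset.sum_congr rfl fun π _ => ?_
  rw [← Nat.card_eq_fintype_card, card_chains hd π]

end EulerianAux

/-- Combinatorial content of Proposition 5.4: for `d ≥ 1` and `0 ≤ ℓ ≤ d`, the identity
of formal power series
`(1-x)^{d+1} ∑_{t ≥ 0} t^ℓ (t+1)^{d-ℓ} x^t = ∑_{π ∈ S_d} x^{des_ℓ(π)}` holds, i.e.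
`A_{d,ℓ}^{(1)}` is the generating polynomial of the `ℓ`-descent statistic over `S_d`. -/
theorem eulerian_eq_descent_gen (d ℓ : ℕ) (hd : 1 ≤ d) (hℓ : ℓ ≤ d) :
    ((1 - PowerSeries.X : PowerSeries ℝ) ^ (d + 1) *
        PowerSeries.mk fun t : ℕ => (t : ℝ) ^ ℓ * ((t : ℝ) + 1) ^ (d - ℓ)) =
      ∑ π : Equiv.Perm (Fin d), (PowerSeries.X : PowerSeries ℝ) ^ permDesL d ℓ π := by
  have h1 : ((1 : PowerSeries ℝ) - PowerSeries.X) ^ (d + 1) * (invOneSubPow ℝ (d + 1)).val = 1 := by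
    rw [← invOneSubPow_inv_eq_one_sub_pow]
    exact (invOneSubPow ℝ (d + 1)).inv_val
  suffices h : (PowerSeries.mk fun t : ℕ => (t : ℝ) ^ ℓ * ((t : ℝ) + 1) ^ (d - ℓ)) =
      (invOneSubPow ℝ (d + 1)).val *
        ∑ π : Equiv.Perm (Fin d), (PowerSeries.X : PowerSeries ℝ) ^ permDesL d ℓ π by
    rw [h, ← mul_assoc, h1, one_mul]
  rw [invOneSubPow_val_succ_eq_mk_add_choose]
  ext n
  rw [PowerSeries.coeff_mk, Finset.mul_sum, map_sum]
  have hterm : ∀ π : Equiv.Perm (Fin d),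
      (PowerSeries.coeff n) ((PowerSeries.mk fun m => ((d + m).choose d : ℝ)) *
          PowerSeries.X ^ permDesL d ℓ π) =
        if permDesL d ℓ π ≤ n then ((d + (n - permDesL d ℓ π)).choose d : ℝ) else 0 := by
    intro π
    rw [PowerSeries.coeff_mul_X_pow']
    split <;> simp [PowerSeries.coeff_mk]
  rw [Finset.sum_congr rfl fun π _ => hterm π]
  have hk := congrArg (Nat.cast : ℕ → ℝ) (EulerianAux.key d ℓ hd hℓ n)
  push_cast at hk
  convert hk using 2
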